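/- Let 𝓒 be a nonempty family of Borel probability measures on ℝ and define the minimal function F_(x)=inf_{μ∈𝓒}F_μ(x). Let α∈(0,1) with α < lim_{x→+∞}F_(x), and suppose there exists a∈ℝ with F_(a)=α and that F_ is strictly increasing on the set {x : 0 < F_(x) < lim_{y→+∞}F_(y)}. Then sup_{μ∈𝓒} q_α(μ) = a. -/

import Mathlib

open MeasureTheory Set Filter

/-- The distribution function of a measure: `F_μ(x) = μ((-∞, x])`. -/
noncomputable def distFun (μ : Measure ℝ) (x : ℝ) : ℝ := (μ (Iic x)).toReal

/-- The lower quantile of order `α`: `q_α(μ) = inf {x : F_μ(x) ≥ α}`. -/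
noncomputable def lowerQuantile (μ : Measure ℝ) (α : ℝ) : ℝ :=
  sInf {x : ℝ | α ≤ distFun μ x}

/-- Let `𝓒` be a nonempty family of Borel probability measures on ℝ with
minimal function `F_(x) = inf_{μ ∈ 𝓒} F_μ(x)`. If `α ∈ (0,1)` is below the
limit `L` of `F_` at `+∞`, `F_(a) = α` for some `a`, and `F_` is strictly
increasing on `{x : 0 < F_(x) < L}`, then `sup_{μ ∈ 𝓒} q_α(μ) = a`. -/
theorem sup_quantile_eq_of_minimal_function
    (C : Set (Measure ℝ)) (hC : C.Nonempty)
    (hprob : ∀ μ ∈ C, IsProbabilityMeasure μ)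
    (Fund : ℝ → ℝ) (hFund : ∀ x, Fund x = sInf ((fun μ : Measure ℝ => distFun μ x) '' C))
    (L : ℝ) (hL : Tendsto Fund atTop (nhds L))
    (α : ℝ) (hα : α ∈ Ioo (0 : ℝ) 1) (hαL : α < L)
    (a : ℝ) (ha : Fund a = α)
    (hmono : StrictMonoOn Fund {x | 0 < Fund x ∧ Fund x < L}) :
    sSup ((fun μ : Measure ℝ => lowerQuantile μ α) '' C) = a := by
  obtain ⟨hα0, hα1⟩ := hα
  have himg : ∀ x : ℝ, ((fun μ : Measure ℝ => distFun μ x) '' C).Nonempty :=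
    fun x => hC.image _
  have hbdd : ∀ x : ℝ, BddBelow ((fun μ : Measure ℝ => distFun μ x) '' C) := fun x =>
    ⟨0, by rintro y ⟨ν, -, rfl⟩; exact ENNReal.toReal_nonneg⟩
  have hF_le : ∀ μ ∈ C, ∀ x, Fund x ≤ distFun μ x := by
    intro μ hμ x
    rw [hFund x]
    exact csInf_le (hbdd x) ⟨μ, hμ, rfl⟩
  have hle_F : ∀ (x c : ℝ), (∀ μ ∈ C, c ≤ distFun μ x) → c ≤ Fund x := by
    intro x c h
    rw [hFund x]
    exact le_csInf (himg x) (by rintro y ⟨ν, hν, rfl⟩; exact h ν hν)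
  have hdmono : ∀ μ ∈ C, Monotone (distFun μ) := by
    intro μ hμ x y hxy
    haveI := hprob μ hμ
    exact ENNReal.toReal_mono (measure_ne_top μ _) (measure_mono (Iic_subset_Iic.2 hxy))
  have hFmono : Monotone Fund := fun x y hxy =>
    hle_F y _ (fun μ hμ => (hF_le μ hμ x).trans (hdmono μ hμ hxy))
  -- a point where Fund exceeds α
  obtain ⟨t0, ht0⟩ : ∃ t0, α < Fund t0 := (hL.eventually_const_lt hαL).exists
  have hSne : ∀ μ ∈ C, {x : ℝ | α ≤ distFun μ x}.Nonempty := fun μ hμ =>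
    ⟨t0, (ht0.le.trans (hF_le μ hμ t0))⟩
  have hSbdd : ∀ μ ∈ C, BddBelow {x : ℝ | α ≤ distFun μ x} := by
    intro μ hμ
    haveI := hprob μ hμ
    have hIic : (⋂ x : ℝ, Iic x) = (∅ : Set ℝ) := by
      ext y
      simp only [mem_iInter, mem_Iic, mem_empty_iff_false, iff_false, not_forall, not_le]
      exact ⟨y - 1, by linarith⟩
    have h0 : Tendsto (fun x : ℝ => μ (Iic x)) atBot (nhds 0) := by
      have := tendsto_measure_iInter_atBot (μ := μ)
        (s := fun x : ℝ => Iic x) (fun i => measurableSet_Iic.nullMeasurableSet)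
        (fun i j h => Iic_subset_Iic.2 h) ⟨0, measure_ne_top μ _⟩
      rw [hIic, measure_empty] at this
      exact this
    have h0' : Tendsto (fun x : ℝ => distFun μ x) atBot (nhds 0) := by
      have := (ENNReal.tendsto_toReal (by norm_num : (0 : ENNReal) ≠ ⊤)).comp h0
      simpa [distFun, Function.comp_def] using this
    obtain ⟨x, hx⟩ := (h0'.eventually_lt_const hα0).exists
    refine ⟨x, fun y hy => ?_⟩
    by_contra h
    push_neg at h
    exact absurd (le_trans hy (hdmono μ hμ h.le)) (not_le.2 hx)
  have hq_le : ∀ μ ∈ C, lowerQuantile μ α ≤ a := by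
    intro μ hμ
    refine csInf_le (hSbdd μ hμ) ?_
    show α ≤ distFun μ a
    rw [← ha]
    exact hF_le μ hμ a
  have hQne : ((fun μ : Measure ℝ => lowerQuantile μ α) '' C).Nonempty := hC.image _
  have hQbdd : BddAbove ((fun μ : Measure ℝ => lowerQuantile μ α) '' C) :=
    ⟨a, by rintro y ⟨ν, hν, rfl⟩; exact hq_le ν hν⟩
  have hsup_le : sSup ((fun μ : Measure ℝ => lowerQuantile μ α) '' C) ≤ a :=
    csSup_le hQne (by rintro y ⟨ν, hν, rfl⟩; exact hq_le ν hν)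
  refine le_antisymm hsup_le ?_
  by_contra hcon
  push_neg at hcon
  set s := sSup ((fun μ : Measure ℝ => lowerQuantile μ α) '' C) with hs
  set t := (s + a) / 2 with htdef
  have hst : s < t := by simp only [htdef]; linarith
  have hta : t < a := by simp only [htdef]; linarith
  have hαt : α ≤ Fund t := by
    refine hle_F t α (fun μ hμ => ?_)
    have hq : lowerQuantile μ α ≤ s := le_csSup hQbdd ⟨μ, hμ, rfl⟩
    have hlt : sInf {x : ℝ | α ≤ distFun μ x} < t := lt_of_le_of_lt hq hst
    obtain ⟨x, hx, hxt⟩ := (csInf_lt_iff (hSbdd μ hμ) (hSne μ hμ)).1 hlt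
    exact hx.trans (hdmono μ hμ hxt.le)
  have hFt : Fund t = α := le_antisymm (ha ▸ hFmono hta.le) hαt
  have hkey := hmono
    ⟨by rw [hFt]; exact hα0, by rw [hFt]; exact hαL⟩
    ⟨by rw [ha]; exact hα0, by rw [ha]; exact hαL⟩ hta
  rw [hFt, ha] at hkey
  exact lt_irrefl α hkey
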